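/- Let n ≥ 1 and let π_1,…,π_n and π'_1,…,π'_n be two families of polynomials in ℝ[x_1,…,x_n] such that: each π_i and each π'_i is homogeneous of the same degree d_i, with d_1 ≤ d_2 ≤ ⋯ ≤ d_n; each family is algebraically independent over ℝ; and the ℝ-subalgebras of ℝ[x_1,…,x_n] generated by {π_1,…,π_n} and by {π'_1,…,π'_n} coincide. Let 1 ≤ k < n be such that d_{k+1} > d_k. Then (i) the ℝ-subalgebra generated by π_1,…,π_k equals the ℝ-subalgebra generated by π'_1,…,π'_k, and (ii) for every point p ∈ ℝ^n, the k × n Jacobian matrices (∂π_i/∂x_j(p))_{1≤i≤k, 1≤j≤n} and (∂π'_i/∂x_j(p))_{1≤i≤k, 1≤j≤n} have the same rank. -/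

import Mathlib

open MvPolynomial

private lemma aeval_whom_isHom {n : ℕ} {d : Fin n → ℕ}
    {π : Fin n → MvPolynomial (Fin n) ℝ} (hπ : ∀ i, (π i).IsHomogeneous (d i))
    {m : ℕ} {F : MvPolynomial (Fin n) ℝ} (hF : F.IsWeightedHomogeneous d m) :
    (aeval π F).IsHomogeneous m := by
  classical
  conv_lhs => rw [F.as_sum]
  rw [map_sum]
  apply MvPolynomial.IsHomogeneous.sum
  intro v hv
  rw [aeval_monomial]
  have hw : (Finsupp.weight d) v = m := hF (mem_support_iff.mp hv)
  have hprod : (v.prod fun j e => π j ^ e).IsHomogeneous m := by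
    rw [← hw, Finsupp.weight_apply, Finsupp.prod, Finsupp.sum]
    exact MvPolynomial.IsHomogeneous.prod _ _ _ fun j _ => by simpa [mul_comm] using (hπ j).pow (v j)
  simpa using (MvPolynomial.isHomogeneous_C (Fin n) (coeff v F)).mul hprod

private lemma pderiv_aeval_eq {n k : ℕ} (g : Fin k → MvPolynomial (Fin n) ℝ) (j : Fin n)
    (G : MvPolynomial (Fin k) ℝ) :
    pderiv j (aeval g G) = ∑ l : Fin k, aeval g (pderiv l G) * pderiv j (g l) := by
  induction G using MvPolynomial.induction_on with
  | C a => simp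
  | add p q hp hq =>
      simp only [map_add, hp, hq, add_mul, ← Finset.sum_add_distrib]
  | mul_X p i hp =>
      simp only [map_mul, aeval_X, pderiv_mul, hp, map_add, add_mul, Finset.sum_mul]
      rw [Finset.sum_add_distrib]
      congr 1
      · exact Finset.sum_congr rfl fun l _ => by ring
      · rw [Finset.sum_eq_single i]
        · simp
        · intro l _ hl
          simp [pderiv_X, Pi.single_apply, hl.symm]
        · simp

private lemma express {n k : ℕ} (hkn : k < n) {d : Fin n → ℕ}
    {π : Fin n → MvPolynomial (Fin n) ℝ} (hπ : ∀ i, (π i).IsHomogeneous (d i))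
    (hd : Monotone d) {e : ℕ} (he : e < d ⟨k, hkn⟩)
    {q : MvPolynomial (Fin n) ℝ} (hq : q.IsHomogeneous e)
    (hmem : q ∈ Algebra.adjoin ℝ (Set.range π)) :
    ∃ G : MvPolynomial (Fin k) ℝ,
      aeval (fun l : Fin k => π (Fin.castLE hkn.le l)) G = q := by
  classical
  rw [Algebra.adjoin_range_eq_range_aeval, AlgHom.mem_range] at hmem
  obtain ⟨F, hF⟩ := hmem
  set Fe := weightedHomogeneousComponent d e F with hFe
  -- Claim 1 : aeval π Fe = q
  have hfin := weightedHomogeneousComponent_finsupp (w := d) F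
  set T := hfin.toFinset with hT
  have hdecomp : ∑ m ∈ T, aeval π (weightedHomogeneousComponent d m F) = q := by
    have h0 := congrArg (aeval π) (sum_weightedHomogeneousComponent d F)
    rw [finsum_eq_sum _ hfin, map_sum, hF] at h0
    exact h0
  have hhom : ∀ m, (aeval π (weightedHomogeneousComponent d m F)).IsHomogeneous m :=
    fun m => aeval_whom_isHom hπ (weightedHomogeneousComponent_isWeightedHomogeneous m F)
  have hqc : homogeneousComponent e q = q := by
    rw [homogeneousComponent_of_mem ((mem_homogeneousSubmodule e q).mpr hq), if_pos rfl]
  have key : aeval π Fe = q := by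
    have h2 : homogeneousComponent e q
        = ∑ m ∈ T, if e = m then aeval π (weightedHomogeneousComponent d m F) else 0 := by
      rw [← hdecomp, map_sum]
      exact Finset.sum_congr rfl fun m _ =>
        homogeneousComponent_of_mem ((mem_homogeneousSubmodule m _).mpr (hhom m))
    rw [hqc, Finset.sum_ite_eq] at h2
    by_cases hmem2 : e ∈ T
    · rw [if_pos hmem2] at h2; exact h2.symm
    · rw [if_neg hmem2] at h2
      have : Fe = 0 := by
        have := hmem2
        replace this : weightedHomogeneousComponent d e F = 0 := by
          by_contra h; exact this ((Set.Finite.mem_toFinset hfin).mpr h)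
        exact this
      rw [this, map_zero, h2]
  -- Claim 2 : Fe uses only variables < k
  have hvars : ↑Fe.vars ⊆ {j : Fin n | (j : ℕ) < k} := by
    intro j hj
    rw [Finset.mem_coe, mem_vars] at hj
    obtain ⟨α, hα, hjα⟩ := hj
    have hw : (Finsupp.weight d) α = e :=
      (weightedHomogeneousComponent_isWeightedHomogeneous e F) (mem_support_iff.mp hα)
    have hle : d j ≤ e := by
      rw [← hw]
      exact Finsupp.le_weight_of_ne_zero' d (Finsupp.mem_support_iff.mp hjα)
    by_contra hjk
    simp only [Set.mem_setOf_eq, not_lt] at hjk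
    have : d ⟨k, hkn⟩ ≤ d j := hd (by simpa [Fin.le_def] using hjk)
    omega
  have hsupp : Fe ∈ supported ℝ {j : Fin n | (j : ℕ) < k} := mem_supported.mpr hvars
  rw [supported_eq_range_rename, AlgHom.mem_range] at hsupp
  obtain ⟨G₀, hG₀⟩ := hsupp
  refine ⟨rename (fun x : {j : Fin n | (j : ℕ) < k} => (⟨(x : Fin n), x.2⟩ : Fin k)) G₀, ?_⟩
  rw [aeval_rename, ← key, ← hG₀, aeval_rename]
  rfl


/-- Lemma 2.2: independence of the choice of basic invariants. If `π₁,…,πₙ` and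
`π'₁,…,π'ₙ` are two families of homogeneous polynomials of the same (weakly
increasing) degrees `d₁ ≤ … ≤ dₙ`, each algebraically independent over `ℝ`,
generating the same `ℝ`-subalgebra, and `1 ≤ k < n` is such that `d_{k+1} > d_k`,
then the subalgebras generated by the first `k` members of each family coincide,
and for every point `p ∈ ℝⁿ` the `k × n` Jacobian matrices of the two families at
`p` have the same rank. (Indices are 0-based: `π i` is `π_{i+1}`.) -/
theorem basic_invariants_independence
    (n : ℕ) (hn : 1 ≤ n)
    (π π' : Fin n → MvPolynomial (Fin n) ℝ) (d : Fin n → ℕ)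
    (hd : Monotone d)
    (hπ : ∀ i, (π i).IsHomogeneous (d i)) (hπ' : ∀ i, (π' i).IsHomogeneous (d i))
    (hind : AlgebraicIndependent ℝ π) (hind' : AlgebraicIndependent ℝ π')
    (hadj : Algebra.adjoin ℝ (Set.range π) = Algebra.adjoin ℝ (Set.range π'))
    (k : ℕ) (hk1 : 1 ≤ k) (hkn : k < n)
    (hdeg : d ⟨k - 1, by omega⟩ < d ⟨k, hkn⟩) :
    Algebra.adjoin ℝ {p | ∃ i : Fin n, (i : ℕ) < k ∧ p = π i} =
      Algebra.adjoin ℝ {p | ∃ i : Fin n, (i : ℕ) < k ∧ p = π' i} ∧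
    ∀ p : Fin n → ℝ,
      (Matrix.of fun (i : Fin k) (j : Fin n) =>
          eval p (pderiv j (π (Fin.castLE hkn.le i)))).rank =
      (Matrix.of fun (i : Fin k) (j : Fin n) =>
          eval p (pderiv j (π' (Fin.castLE hkn.le i)))).rank := by
  classical
  set πk := fun l : Fin k => π (Fin.castLE hkn.le l) with hπk
  set π'k := fun l : Fin k => π' (Fin.castLE hkn.le l) with hπ'k
  -- degree bound for indices < k
  have hlt : ∀ i : Fin n, (i : ℕ) < k → d i < d ⟨k, hkn⟩ := by
    intro i hi
    have h1 : d i ≤ d ⟨k - 1, by omega⟩ := hd (by simp [Fin.le_def]; omega)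
    omega
  -- range descriptions
  have hsetπ : {p | ∃ i : Fin n, (i : ℕ) < k ∧ p = π i} = Set.range πk := by
    ext p
    constructor
    · rintro ⟨i, hi, rfl⟩
      exact ⟨⟨(i : ℕ), hi⟩, congrArg π (Fin.ext rfl)⟩
    · rintro ⟨l, rfl⟩
      exact ⟨Fin.castLE hkn.le l, l.2, rfl⟩
  have hsetπ' : {p | ∃ i : Fin n, (i : ℕ) < k ∧ p = π' i} = Set.range π'k := by
    ext p
    constructor
    · rintro ⟨i, hi, rfl⟩
      exact ⟨⟨(i : ℕ), hi⟩, congrArg π' (Fin.ext rfl)⟩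
    · rintro ⟨l, rfl⟩
      exact ⟨Fin.castLE hkn.le l, l.2, rfl⟩
  -- expressibility in both directions
  have hexp : ∀ i : Fin k, ∃ G : MvPolynomial (Fin k) ℝ,
      aeval π'k G = π (Fin.castLE hkn.le i) := by
    intro i
    refine express hkn hπ' hd (hlt _ i.2) (hπ _) ?_
    rw [← hadj]
    exact Algebra.subset_adjoin (Set.mem_range_self _)
  have hexp' : ∀ i : Fin k, ∃ G : MvPolynomial (Fin k) ℝ,
      aeval πk G = π' (Fin.castLE hkn.le i) := by
    intro i
    refine express hkn hπ hd (hlt _ i.2) (hπ' _) ?_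
    rw [hadj]
    exact Algebra.subset_adjoin (Set.mem_range_self _)
  choose G hG using hexp
  choose G' hG' using hexp'
  constructor
  · rw [hsetπ, hsetπ']
    apply le_antisymm
    · apply Algebra.adjoin_le
      rintro x ⟨l, rfl⟩
      rw [Algebra.adjoin_range_eq_range_aeval]
      exact ⟨G l, hG l⟩
    · apply Algebra.adjoin_le
      rintro x ⟨l, rfl⟩
      rw [Algebra.adjoin_range_eq_range_aeval]
      exact ⟨G' l, hG' l⟩
  · intro p
    set J : Matrix (Fin k) (Fin n) ℝ :=
      Matrix.of fun i j => eval p (pderiv j (π (Fin.castLE hkn.le i))) with hJ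
    set J' : Matrix (Fin k) (Fin n) ℝ :=
      Matrix.of fun i j => eval p (pderiv j (π' (Fin.castLE hkn.le i))) with hJ'
    set Cm : Matrix (Fin k) (Fin k) ℝ :=
      Matrix.of fun i l => eval p (aeval π'k (pderiv l (G i))) with hCm
    set Cm' : Matrix (Fin k) (Fin k) ℝ :=
      Matrix.of fun i l => eval p (aeval πk (pderiv l (G' i))) with hCm'
    have hJeq : J = Cm * J' := by
      ext i j
      rw [Matrix.mul_apply]
      show eval p (pderiv j (π (Fin.castLE hkn.le i))) = _
      rw [← hG i, pderiv_aeval_eq, map_sum]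
      exact Finset.sum_congr rfl fun l _ => by rw [map_mul]; rfl
    have hJ'eq : J' = Cm' * J := by
      ext i j
      rw [Matrix.mul_apply]
      show eval p (pderiv j (π' (Fin.castLE hkn.le i))) = _
      rw [← hG' i, pderiv_aeval_eq, map_sum]
      exact Finset.sum_congr rfl fun l _ => by rw [map_mul]; rfl
    have h1 : J.rank ≤ J'.rank := by rw [hJeq]; exact Matrix.rank_mul_le_right _ _
    have h2 : J'.rank ≤ J.rank := by rw [hJ'eq]; exact Matrix.rank_mul_le_right _ _
    exact le_antisymm h1 h2
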